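/- Let n be a positive integer and let p, q > 0 with p + q < 1. Let (M, K, n−M−K) be a multinomial random vector of n trials with cell probabilities (p, q, 1−p−q), i.e. P(M=m, K=k) = n!/(m! k! (n−m−k)!) · p^m q^k (1−p−q)^{n−m−k} for m, k ≥ 0 with m+k ≤ n. Then E[(J(n) − J(M)) (J(n) − J(K))] = ∑_{m=1}^{n} ∑_{k=1}^{m} [ (1−q)^m (1 − p/(1−q))^k + (1−p)^m (1 − q/(1−p))^k ] / (mk) + ∑_{m=1}^{n} [ 1 − (1−p)^m − (1−q)^m ] / m². -/

import Mathlib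

/-- `J m` is the `m`-th harmonic number `∑_{k=1}^m 1/k`, with `J 0 = 0`. -/
noncomputable def J (m : ℕ) : ℝ := ∑ k ∈ Finset.range m, (1 : ℝ) / (k + 1)


open Finset

noncomputable def AB (x y : ℝ) (n : ℕ) : ℝ := ∑ t ∈ Finset.Icc 1 n, y ^ t * (x + y) ^ (n - t) / t

lemma J_succ (n : ℕ) : J (n + 1) = J n + 1 / (n + 1) := by
  simp [J, Finset.sum_range_succ]

lemma AB_succ (x y : ℝ) (n : ℕ) :
    AB x y (n + 1) = (x + y) * AB x y n + y ^ (n + 1) / (n + 1) := by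
  rw [AB, Finset.sum_Icc_succ_top (by omega : 1 ≤ n + 1)]
  rw [AB, Finset.mul_sum]
  congr 1
  · apply Finset.sum_congr rfl
    intro t ht
    simp only [Finset.mem_Icc] at ht
    have : n + 1 - t = (n - t) + 1 := by omega
    rw [this]
    ring
  · simp

lemma sum_choose_xy (x y : ℝ) (n : ℕ) :
    ∑ m ∈ range (n + 1), (n.choose m : ℝ) * x ^ m * y ^ (n - m) = (x + y) ^ n := by
  rw [add_pow]
  apply Finset.sum_congr rfl
  intro m _; ring

lemma cast_choose_div (M m : ℕ) :
    (M.choose m : ℝ) / (m + 1) = ((M + 1).choose (m + 1) : ℝ) / (M + 1) := by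
  have h := Nat.add_one_mul_choose_eq M m
  have h' : ((M : ℝ) + 1) * (M.choose m : ℝ) = ((M + 1).choose (m + 1) : ℝ) * (m + 1) := by
    exact_mod_cast congrArg (Nat.cast (R := ℝ)) h
  rw [div_eq_div_iff (by positivity) (by positivity)]
  linarith [h']

lemma sum_choose_succ_div (x y : ℝ) (M : ℕ) :
    ∑ m ∈ range (M + 1), (M.choose m : ℝ) * x ^ (m + 1) * y ^ (M - m) / (m + 1)
      = ((x + y) ^ (M + 1) - y ^ (M + 1)) / (M + 1) := by
  have h1 : ∀ m ∈ range (M + 1),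
      (M.choose m : ℝ) * x ^ (m + 1) * y ^ (M - m) / (m + 1)
        = ((M + 1).choose (m + 1) : ℝ) * x ^ (m + 1) * y ^ ((M + 1) - (m + 1)) / (M + 1) := by
    intro m _
    have key : ((M : ℝ) + 1) * (M.choose m : ℝ) = ((M + 1).choose (m + 1) : ℝ) * (m + 1) := by
      exact_mod_cast congrArg (Nat.cast (R := ℝ)) (Nat.add_one_mul_choose_eq M m)
    have h2 : (M + 1) - (m + 1) = M - m := by omega
    rw [h2]
    rw [div_eq_div_iff (by positivity) (by positivity)]
    linear_combination (x ^ (m + 1) * y ^ (M - m)) * key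
  rw [Finset.sum_congr rfl h1]
  have h3 : (x + y) ^ (M + 1) = ∑ m ∈ range (M + 2), ((M+1).choose m : ℝ) * x ^ m * y ^ ((M+1) - m) := by
    rw [sum_choose_xy]
  rw [Finset.sum_range_succ'] at h3
  simp only [Nat.choose_zero_right, Nat.cast_one, pow_zero, Nat.sub_zero] at h3
  rw [eq_div_iff (by positivity : ((M:ℝ)+1) ≠ 0), Finset.sum_mul]
  have : ∀ m ∈ range (M+1), ((M + 1).choose (m + 1) : ℝ) * x ^ (m + 1) * y ^ ((M + 1) - (m + 1)) / (M + 1) * (M+1)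
      = ((M + 1).choose (m + 1) : ℝ) * x ^ (m + 1) * y ^ ((M + 1) - (m + 1)) := by
    intro m _
    field_simp
  rw [Finset.sum_congr rfl this]
  linarith [h3]

lemma binom_J (x y : ℝ) : ∀ n : ℕ,
    ∑ m ∈ range (n + 1), (n.choose m : ℝ) * x ^ m * y ^ (n - m) * (J n - J m) = AB x y n := by
  intro n
  induction n with
  | zero => simp [AB]
  | succ n ih =>
    rw [Finset.sum_range_succ']
    simp only [Nat.choose_zero_right, Nat.cast_one, pow_zero, Nat.sub_zero]
    have hJ0 : J 0 = 0 := by simp [J]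
    -- rewrite each term of the main sum using Pascal and J identities
    have step : ∀ m ∈ range (n + 1),
        ((n + 1).choose (m + 1) : ℝ) * x ^ (m + 1) * y ^ (n + 1 - (m + 1)) * (J (n + 1) - J (m + 1))
          = ((n.choose m : ℝ) * x ^ m * y ^ (n - m) * (J n - J m)) * x
            + ((n.choose m : ℝ) * x ^ m * y ^ (n - m)) * (x / (n + 1))
            - (n.choose m : ℝ) * x ^ (m + 1) * y ^ (n - m) / (m + 1)
            + ((n.choose (m + 1) : ℝ) * x ^ (m + 1) * y ^ (n - (m + 1)) * (J n - J (m + 1))) * y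
            + ((n.choose (m + 1) : ℝ) * x ^ (m + 1) * y ^ (n - (m + 1))) * (y / (n + 1)) := by
      intro m hm
      simp only [mem_range] at hm
      have h1 : (n + 1) - (m + 1) = n - m := by omega
      have hc : (((n + 1).choose (m + 1) : ℕ) : ℝ) = (n.choose m : ℝ) + (n.choose (m + 1) : ℝ) := by
        rw [Nat.choose_succ_succ]; push_cast; ring
      rw [h1, hc, J_succ, J_succ]
      by_cases hmn : m + 1 ≤ n
      · have h2 : n - m = (n - (m + 1)) + 1 := by omega
        rw [h2]
        have hn1 : ((n:ℝ) + 1) ≠ 0 := by positivity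
        have hm1 : ((m:ℝ) + 1) ≠ 0 := by positivity
        field_simp
        ring
      · have hz : n.choose (m+1) = 0 := Nat.choose_eq_zero_of_lt (by omega)
        rw [hz]
        have hn1 : ((n:ℝ) + 1) ≠ 0 := by positivity
        have hm1 : ((m:ℝ) + 1) ≠ 0 := by positivity
        have h2 : n - m = 0 := by omega
        rw [h2]
        push_cast
        field_simp
        ring
    rw [Finset.sum_congr rfl step]
    simp only [Finset.sum_add_distrib, Finset.sum_sub_distrib, ← Finset.sum_mul, ← Finset.sum_div]
    rw [ih, sum_choose_xy]
    have hT2 : ∑ m ∈ range (n + 1), (n.choose (m+1) : ℝ) * x ^ (m+1) * y ^ (n - (m+1)) * (J n - J (m+1))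
        = AB x y n - y ^ n * J n := by
      have h := ih
      rw [Finset.sum_range_succ'] at h
      simp only [Nat.choose_zero_right, Nat.cast_one, pow_zero, Nat.sub_zero, hJ0, sub_zero] at h
      rw [Finset.sum_range_succ, Nat.choose_succ_self]
      push_cast
      simp only [zero_mul, mul_zero, zero_mul, add_zero]
      linarith [h]
    have hT3 : ∑ m ∈ range (n + 1), (n.choose (m+1) : ℝ) * x ^ (m+1) * y ^ (n - (m+1))
        = (x + y) ^ n - y ^ n := by
      have h := sum_choose_xy x y n
      rw [Finset.sum_range_succ'] at h
      simp only [Nat.choose_zero_right, Nat.cast_one, pow_zero, Nat.sub_zero] at h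
      rw [Finset.sum_range_succ, Nat.choose_succ_self]
      push_cast
      simp only [zero_mul, mul_zero, add_zero]
      linarith [h]
    have hT4 : ∑ m ∈ range (n + 1), (n.choose m : ℝ) * x ^ (m+1) * y ^ (n - m) / (m + 1)
        = ((x + y) ^ (n + 1) - y ^ (n + 1)) / (n + 1) := sum_choose_succ_div x y n
    rw [hT2, hT3, hT4, AB_succ, J_succ, hJ0]
    have hn1 : ((n:ℝ) + 1) ≠ 0 := by positivity
    field_simp
    ring

noncomputable def mu (p q r : ℝ) (n m k : ℕ) : ℝ :=
  (n.choose m : ℝ) * ((n - m).choose k : ℝ) * p ^ m * q ^ k * r ^ (n - m - k)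

lemma mu_zero {n m k : ℕ} (h : n < m + k) (p q r : ℝ) : mu p q r n m k = 0 := by
  unfold mu
  by_cases hm : m ≤ n
  · have : (n - m).choose k = 0 := Nat.choose_eq_zero_of_lt (by omega)
    simp [this]
  · have : n.choose m = 0 := Nat.choose_eq_zero_of_lt (by omega)
    simp [this]

lemma choose_symm_real (n m k : ℕ) :
    (n.choose m : ℝ) * ((n - m).choose k : ℝ) = (n.choose k : ℝ) * ((n - k).choose m : ℝ) := by
  by_cases h : m + k ≤ n
  · have hm : m ≤ n := by omega
    have hk : k ≤ n := by omega
    have hk' : k ≤ n - m := by omega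
    have hm' : m ≤ n - k := by omega
    rw [Nat.cast_choose ℝ hm, Nat.cast_choose ℝ hk', Nat.cast_choose ℝ hk, Nat.cast_choose ℝ hm']
    have e1 : n - m - k = n - k - m := by omega
    have n1 : (m.factorial : ℝ) ≠ 0 := by exact_mod_cast Nat.factorial_ne_zero m
    have n2 : (k.factorial : ℝ) ≠ 0 := by exact_mod_cast Nat.factorial_ne_zero k
    have n3 : ((n - m).factorial : ℝ) ≠ 0 := by exact_mod_cast Nat.factorial_ne_zero _
    have n4 : ((n - k).factorial : ℝ) ≠ 0 := by exact_mod_cast Nat.factorial_ne_zero _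
    have n5 : ((n - m - k).factorial : ℝ) ≠ 0 := by exact_mod_cast Nat.factorial_ne_zero _
    rw [e1]
    field_simp
  · push_neg at h
    by_cases hm : m ≤ n
    · have h1 : (n - m).choose k = 0 := Nat.choose_eq_zero_of_lt (by omega)
      by_cases hk : k ≤ n
      · have h2 : (n - k).choose m = 0 := Nat.choose_eq_zero_of_lt (by omega)
        simp [h1, h2]
      · have h2 : n.choose k = 0 := Nat.choose_eq_zero_of_lt (by omega)
        simp [h1, h2]
    · have h1 : n.choose m = 0 := Nat.choose_eq_zero_of_lt (by omega)
      by_cases hk : k ≤ n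
      · have h2 : (n - k).choose m = 0 := Nat.choose_eq_zero_of_lt (by omega)
        simp [h1, h2]
      · have h2 : n.choose k = 0 := Nat.choose_eq_zero_of_lt (by omega)
        simp [h1, h2]

lemma mu_symm (p q r : ℝ) (n m k : ℕ) : mu p q r n m k = mu q p r n k m := by
  unfold mu
  rw [choose_symm_real]
  have : n - m - k = n - k - m := by omega
  rw [this]
  ring

lemma triangle_comm (n : ℕ) (F : ℕ → ℕ → ℝ) (hF : ∀ m k, n < m + k → F m k = 0) :
    ∑ m ∈ range (n + 1), ∑ k ∈ range (n + 1 - m), F m k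
      = ∑ k ∈ range (n + 1), ∑ m ∈ range (n + 1 - k), F m k := by
  have ext : ∀ (G : ℕ → ℕ → ℝ), (∀ m k, n < m + k → G m k = 0) →
      ∑ m ∈ range (n + 1), ∑ k ∈ range (n + 1 - m), G m k
        = ∑ m ∈ range (n + 1), ∑ k ∈ range (n + 1), G m k := by
    intro G hG
    apply Finset.sum_congr rfl
    intro m hm
    simp only [mem_range] at hm
    apply Finset.sum_subset
    · intro k hk; simp only [mem_range] at *; omega
    · intro k hk hk'
      simp only [mem_range] at hk hk'
      exact hG m k (by omega)
  rw [ext F hF, ext (fun k m => F m k) (fun m k h => hF k m (by omega)), Finset.sum_comm]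

lemma sig_left (p q r : ℝ) (n : ℕ) (g : ℕ → ℝ) :
    ∑ m ∈ range (n + 1), ∑ k ∈ range (n + 1 - m), mu p q r n m k * g m
      = ∑ m ∈ range (n + 1), (n.choose m : ℝ) * p ^ m * (q + r) ^ (n - m) * g m := by
  apply Finset.sum_congr rfl
  intro m hm
  simp only [mem_range] at hm
  have hnm : n + 1 - m = (n - m) + 1 := by omega
  have hmu : ∑ k ∈ range ((n - m) + 1), mu p q r n m k
      = (n.choose m : ℝ) * p ^ m * (q + r) ^ (n - m) := by
    unfold mu
    calc ∑ k ∈ range ((n - m) + 1), (n.choose m : ℝ) * ((n - m).choose k : ℝ) * p ^ m * q ^ k * r ^ (n - m - k)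
        = (n.choose m : ℝ) * p ^ m * ∑ k ∈ range ((n - m) + 1), ((n - m).choose k : ℝ) * q ^ k * r ^ ((n - m) - k) := by
          rw [Finset.mul_sum]; apply Finset.sum_congr rfl; intro k _; ring
      _ = _ := by rw [sum_choose_xy]
  rw [hnm, ← Finset.sum_mul, hmu]

lemma sig_swap (p q r : ℝ) (n : ℕ) (f : ℕ → ℕ → ℝ) :
    ∑ m ∈ range (n + 1), ∑ k ∈ range (n + 1 - m), mu p q r n m k * f m k
      = ∑ k ∈ range (n + 1), ∑ m ∈ range (n + 1 - k), mu q p r n k m * f m k := by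
  rw [triangle_comm n (fun m k => mu p q r n m k * f m k)
    (fun m k h => by show mu p q r n m k * f m k = 0; rw [mu_zero h]; ring)]
  apply Finset.sum_congr rfl; intro k _
  apply Finset.sum_congr rfl; intro m _
  rw [mu_symm]

lemma sig_one (p q r : ℝ) (n : ℕ) :
    ∑ m ∈ range (n + 1), ∑ k ∈ range (n + 1 - m), mu p q r n m k = (p + (q + r)) ^ n := by
  have h := sig_left p q r n (fun _ => 1)
  simp only [mul_one] at h
  rw [h, sum_choose_xy]

lemma sig_Am (p q r : ℝ) (n : ℕ) :
    ∑ m ∈ range (n + 1), ∑ k ∈ range (n + 1 - m), mu p q r n m k * (J n - J m)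
      = AB p (q + r) n := by
  rw [sig_left p q r n (fun m => J n - J m), binom_J]

lemma sig_Ak (p q r : ℝ) (n : ℕ) :
    ∑ m ∈ range (n + 1), ∑ k ∈ range (n + 1 - m), mu p q r n m k * (J n - J k)
      = AB q (p + r) n := by
  rw [sig_swap p q r n (fun _ k => J n - J k), sig_left q p r n (fun k => J n - J k), binom_J]

lemma sig_M4 (p q r : ℝ) (n : ℕ) :
    (∑ m ∈ range (n + 1), ∑ k ∈ range (n + 1 - m),
        mu p q r n m k * ((J (n + 1) - J k) / (m + 1))) * p
      = (AB q (p + r) (n + 1) - AB q r (n + 1)) / (n + 1) := by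
  rw [sig_swap p q r n (fun m k => (J (n + 1) - J k) / (m + 1)), Finset.sum_mul]
  have step : ∀ k ∈ range (n + 1),
      (∑ m ∈ range (n + 1 - k), mu q p r n k m * ((J (n + 1) - J k) / (m + 1))) * p
        = (((n + 1).choose k : ℝ) * q ^ k * (p + r) ^ ((n + 1) - k) * (J (n + 1) - J k)
            - ((n + 1).choose k : ℝ) * q ^ k * r ^ ((n + 1) - k) * (J (n + 1) - J k)) / (n + 1) := by
    intro k hk
    simp only [mem_range] at hk
    have hnk : n + 1 - k = (n - k) + 1 := by omega
    rw [hnk]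
    have inner : (∑ m ∈ range ((n - k) + 1), mu q p r n k m * ((J (n + 1) - J k) / (m + 1))) * p
        = (n.choose k : ℝ) * q ^ k * (J (n + 1) - J k)
          * ∑ m ∈ range ((n - k) + 1), ((n - k).choose m : ℝ) * p ^ (m + 1) * r ^ ((n - k) - m) / (m + 1) := by
      rw [Finset.sum_mul, Finset.mul_sum]
      apply Finset.sum_congr rfl; intro m _
      unfold mu
      ring
    rw [inner, sum_choose_succ_div p r (n - k), ← mul_div_assoc]
    have key : (n.choose k : ℝ) * ((n : ℝ) + 1) = ((n + 1).choose k : ℝ) * (((n - k) : ℕ) + 1) := by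
      have h := Nat.choose_mul_succ_eq n k
      have h2 : n + 1 - k = (n - k) + 1 := by omega
      rw [h2] at h
      exact_mod_cast congrArg (Nat.cast (R := ℝ)) h
    rw [div_eq_div_iff (by positivity) (by positivity : ((n : ℝ) + 1) ≠ 0)]
    push_cast
    push_cast at key
    linear_combination (q ^ k * (J (n + 1) - J k) * ((p + r) ^ (n - k + 1) - r ^ (n - k + 1))) * key
  rw [Finset.sum_congr rfl step]
  rw [← Finset.sum_div]
  congr 1
  rw [Finset.sum_sub_distrib]
  have e1 : ∑ k ∈ range (n + 1),
      ((n + 1).choose k : ℝ) * q ^ k * (p + r) ^ ((n + 1) - k) * (J (n + 1) - J k)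
      = AB q (p + r) (n + 1) := by
    have h := binom_J q (p + r) (n + 1)
    rw [Finset.sum_range_succ] at h
    simp only [sub_self, mul_zero, add_zero] at h
    exact h
  have e2 : ∑ k ∈ range (n + 1),
      ((n + 1).choose k : ℝ) * q ^ k * r ^ ((n + 1) - k) * (J (n + 1) - J k)
      = AB q r (n + 1) := by
    have h := binom_J q r (n + 1)
    rw [Finset.sum_range_succ] at h
    simp only [sub_self, mul_zero, add_zero] at h
    exact h
  rw [e1, e2]

lemma split_lemma (p q r : ℝ) (n : ℕ) (f : ℕ → ℕ → ℝ) :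
    (∑ m ∈ range (n + 2), ∑ k ∈ range (n + 2 - m),
      mu p q r (n + 1) m k * f m k)
    = (∑ m ∈ range (n + 1), ∑ k ∈ range (n + 1 - m),
        mu p q r n m k * f (m + 1) k) * p
    + (∑ m ∈ range (n + 1), ∑ k ∈ range (n + 1 - m),
        mu p q r n m k * f m (k + 1)) * q
    + (∑ m ∈ range (n + 1), ∑ k ∈ range (n + 1 - m),
        mu p q r n m k * f m k) * r := by
  have hJ : True := trivial
  rw [Finset.sum_range_succ']
  have stepB : ∀ m ∈ range (n + 1),
      (∑ k ∈ range (n + 2 - (m + 1)), mu p q r (n + 1) (m + 1) k * f (m + 1) k)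
        = (∑ k ∈ range (n + 1 - m), mu p q r n m k * f (m + 1) k) * p
          + ∑ k ∈ range (n + 1 - m),
              (n.choose (m + 1) : ℝ) * ((n - m).choose k : ℝ) * p ^ (m + 1) * q ^ k
                * r ^ (n - m - k) * f (m + 1) k := by
    intro m hm
    have h1 : n + 2 - (m + 1) = n + 1 - m := by omega
    rw [h1, Finset.sum_mul, ← Finset.sum_add_distrib]
    apply Finset.sum_congr rfl
    intro k hk
    unfold mu
    have h2 : (n + 1) - (m + 1) = n - m := by omega
    rw [h2]
    have hc : (((n + 1).choose (m + 1) : ℕ) : ℝ) = (n.choose m : ℝ) + (n.choose (m + 1) : ℝ) := by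
      rw [Nat.choose_succ_succ]; push_cast; ring
    rw [hc]
    ring
  rw [Finset.sum_congr rfl stepB, Finset.sum_add_distrib, ← Finset.sum_mul]
  -- now handle X + Inner0
  have hXI : (∑ m ∈ range (n + 1), ∑ k ∈ range (n + 1 - m),
        (n.choose (m + 1) : ℝ) * ((n - m).choose k : ℝ) * p ^ (m + 1) * q ^ k
          * r ^ (n - m - k) * f (m + 1) k)
      + (∑ k ∈ range (n + 2 - 0), mu p q r (n + 1) 0 k * f 0 k)
      = ∑ m ∈ range (n + 2), ∑ k ∈ range (n + 2 - m),
          (n.choose m : ℝ) * ((n + 1 - m).choose k : ℝ) * p ^ m * q ^ k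
            * r ^ (n + 1 - m - k) * f m k := by
    rw [Finset.sum_range_succ'
      (fun m => ∑ k ∈ range (n + 2 - m),
        (n.choose m : ℝ) * ((n + 1 - m).choose k : ℝ) * p ^ m * q ^ k
          * r ^ (n + 1 - m - k) * f m k)]
    congr 1
    · apply Finset.sum_congr rfl
      intro m hm
      have h1 : n + 2 - (m + 1) = n + 1 - m := by omega
      rw [h1]
      apply Finset.sum_congr rfl
      intro k hk
      have h2 : n + 1 - (m + 1) = n - m := by omega
      rw [h2]
    · apply Finset.sum_congr rfl
      intro k hk
      unfold mu
      norm_num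
  rw [add_assoc, hXI]
  -- drop m = n+1 slice
  have hdrop : ∑ m ∈ range (n + 2), ∑ k ∈ range (n + 2 - m),
          (n.choose m : ℝ) * ((n + 1 - m).choose k : ℝ) * p ^ m * q ^ k
            * r ^ (n + 1 - m - k) * f m k
      = ∑ m ∈ range (n + 1), ∑ k ∈ range (n + 2 - m),
          (n.choose m : ℝ) * ((n + 1 - m).choose k : ℝ) * p ^ m * q ^ k
            * r ^ (n + 1 - m - k) * f m k := by
    rw [Finset.sum_range_succ]
    have : n + 2 - (n + 1) = 1 := by omega
    rw [this]
    simp [Nat.choose_succ_self]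
  rw [hdrop]
  have stepE : ∀ m ∈ range (n + 1),
      (∑ k ∈ range (n + 2 - m),
          (n.choose m : ℝ) * ((n + 1 - m).choose k : ℝ) * p ^ m * q ^ k
            * r ^ (n + 1 - m - k) * f m k)
        = (∑ k ∈ range (n + 1 - m), mu p q r n m k * f m (k + 1)) * q
          + (∑ k ∈ range (n + 1 - m), mu p q r n m k * f m k) * r := by
    intro m hm
    simp only [mem_range] at hm
    have h2 : n + 2 - m = (n - m) + 2 := by omega
    have h3 : n + 1 - m = (n - m) + 1 := by omega
    rw [h2, h3]
    rw [Finset.sum_range_succ'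
      (fun k => (n.choose m : ℝ) * (((n - m) + 1).choose k : ℝ) * p ^ m * q ^ k
            * r ^ ((n - m) + 1 - k) * f m k)]
    have stepK : ∀ k ∈ range ((n - m) + 1),
        (n.choose m : ℝ) * (((n - m) + 1).choose (k + 1) : ℝ) * p ^ m * q ^ (k + 1)
            * r ^ ((n - m) + 1 - (k + 1)) * f m (k + 1)
          = mu p q r n m k * f m (k + 1) * q
            + (n.choose m : ℝ) * (((n - m)).choose (k + 1) : ℝ) * p ^ m * q ^ (k + 1)
                * r ^ ((n - m) - k) * f m (k + 1) := by
      intro k hk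
      have h4 : (n - m) + 1 - (k + 1) = (n - m) - k := by omega
      rw [h4]
      have hc : ((((n - m) + 1).choose (k + 1) : ℕ) : ℝ)
          = ((n - m).choose k : ℝ) + ((n - m).choose (k + 1) : ℝ) := by
        rw [Nat.choose_succ_succ]; push_cast; ring
      rw [hc]
      unfold mu
      ring
    rw [Finset.sum_congr rfl stepK, Finset.sum_add_distrib, ← Finset.sum_mul]
    have hY : (∑ k ∈ range ((n - m) + 1),
          (n.choose m : ℝ) * (((n - m)).choose (k + 1) : ℝ) * p ^ m * q ^ (k + 1)
            * r ^ ((n - m) - k) * f m (k + 1))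
        + (n.choose m : ℝ) * (((n - m) + 1).choose 0 : ℝ) * p ^ m * q ^ 0
            * r ^ ((n - m) + 1 - 0) * f m 0
        = ∑ k ∈ range ((n - m) + 2),
            (n.choose m : ℝ) * (((n - m)).choose k : ℝ) * p ^ m * q ^ k
              * r ^ ((n - m) + 1 - k) * f m k := by
      rw [Finset.sum_range_succ'
        (fun k => (n.choose m : ℝ) * (((n - m)).choose k : ℝ) * p ^ m * q ^ k
              * r ^ ((n - m) + 1 - k) * f m k)]
      congr 1
      · apply Finset.sum_congr rfl
        intro k hk
        have h5 : (n - m) + 1 - (k + 1) = (n - m) - k := by omega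
        rw [h5]
      · norm_num
    rw [add_assoc, hY]
    have hdrop2 : ∑ k ∈ range ((n - m) + 2),
            (n.choose m : ℝ) * (((n - m)).choose k : ℝ) * p ^ m * q ^ k
              * r ^ ((n - m) + 1 - k) * f m k
        = (∑ k ∈ range ((n - m) + 1), mu p q r n m k * f m k) * r := by
      rw [Finset.sum_range_succ]
      simp only [Nat.choose_succ_self, Nat.cast_zero, zero_mul, mul_zero, zero_mul, add_zero]
      rw [Finset.sum_mul]
      apply Finset.sum_congr rfl
      intro k hk
      simp only [mem_range] at hk
      have h6 : (n - m) + 1 - k = ((n - m) - k) + 1 := by omega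
      rw [h6, pow_succ]
      unfold mu
      ring
    rw [hdrop2]
  rw [Finset.sum_congr rfl stepE, Finset.sum_add_distrib, ← Finset.sum_mul, ← Finset.sum_mul]
  ring

noncomputable def Lg (p q r : ℝ) (n : ℕ) : ℝ :=
  ∑ m ∈ range (n + 1), ∑ k ∈ range (n + 1 - m), mu p q r n m k * ((J n - J m) * (J n - J k))

set_option maxHeartbeats 1000000 in
lemma Lg_rec (p q r : ℝ) (hs : p + q + r = 1) (n : ℕ) :
    Lg p q r (n + 1) = Lg p q r n + (AB p r (n + 1) + AB q r (n + 1)) / (n + 1)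
      + (1 - (p + r) ^ (n + 1) - (q + r) ^ (n + 1)) / ((n + 1) * (n + 1)) := by
  have hsplit := split_lemma p q r n (fun m k => (J (n + 1) - J m) * (J (n + 1) - J k))
  beta_reduce at hsplit
  have hLg : Lg p q r (n + 1)
      = ∑ m ∈ range (n + 2), ∑ k ∈ range (n + 2 - m),
          mu p q r (n + 1) m k * ((J (n + 1) - J m) * (J (n + 1) - J k)) := rfl
  rw [hLg, hsplit]
  -- compute C2
  have hn1 : ((n : ℝ) + 1) ≠ 0 := by positivity
  have e1 : ∀ (m k : ℕ), mu p q r n m k * ((J (n + 1) - J m) * (J (n + 1) - J k))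
      = mu p q r n m k * ((J n - J m) * (J n - J k))
        + mu p q r n m k * (J n - J m) * (1 / (n + 1))
        + mu p q r n m k * (J n - J k) * (1 / (n + 1))
        + mu p q r n m k * (1 / ((n + 1) * (n + 1))) := by
    intro m k; rw [J_succ]; field_simp; ring
  have sAm : ∑ i ∈ range (n + 1), (∑ j ∈ range (n + 1 - i), mu p q r n i j) * (J n - J i)
      = AB p (q + r) n := by
    rw [← sig_Am p q r n]
    apply Finset.sum_congr rfl; intro m _; rw [Finset.sum_mul]
  have hC2 : ∑ m ∈ range (n + 1), ∑ k ∈ range (n + 1 - m),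
        mu p q r n m k * ((J (n + 1) - J m) * (J (n + 1) - J k))
      = Lg p q r n + AB p (q + r) n * (1 / (n + 1)) + AB q (p + r) n * (1 / (n + 1))
        + (p + (q + r)) ^ n * (1 / ((n + 1) * (n + 1))) := by
    simp only [e1, Finset.sum_add_distrib, ← Finset.sum_mul]
    rw [sAm, sig_Ak, sig_one]
    rfl
  -- P part
  have eP : ∀ (m k : ℕ), mu p q r n m k * ((J (n + 1) - J (m + 1)) * (J (n + 1) - J k))
      = mu p q r n m k * ((J (n + 1) - J m) * (J (n + 1) - J k))
        - mu p q r n m k * ((J (n + 1) - J k) / (m + 1)) := by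
    intro m k; rw [J_succ m]; ring
  have eQ : ∀ (m k : ℕ), mu p q r n m k * ((J (n + 1) - J m) * (J (n + 1) - J (k + 1)))
      = mu p q r n m k * ((J (n + 1) - J m) * (J (n + 1) - J k))
        - mu p q r n m k * ((J (n + 1) - J m) / (k + 1)) := by
    intro m k; rw [J_succ k]; ring
  simp only [eP, eQ, Finset.sum_sub_distrib]
  rw [sub_mul, sub_mul, hC2, sig_M4 p q r n]
  have hDQ : (∑ m ∈ range (n + 1), ∑ k ∈ range (n + 1 - m),
        mu p q r n m k * ((J (n + 1) - J m) / (k + 1))) * q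
      = (AB p (q + r) (n + 1) - AB p r (n + 1)) / (n + 1) := by
    rw [sig_swap p q r n (fun m k => (J (n + 1) - J m) / (k + 1))]
    exact sig_M4 q p r n
  rw [hDQ]
  have a1 : AB p (q + r) (n + 1) = AB p (q + r) n + (q + r) ^ (n + 1) / (n + 1) := by
    rw [AB_succ]
    have : p + (q + r) = 1 := by linarith
    rw [this]; ring
  have a2 : AB q (p + r) (n + 1) = AB q (p + r) n + (p + r) ^ (n + 1) / (n + 1) := by
    rw [AB_succ]
    have : q + (p + r) = 1 := by linarith
    rw [this]; ring
  rw [a1, a2]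
  have hone : p + (q + r) = 1 := by linarith
  rw [hone, one_pow]
  simp only [div_mul_eq_div_div]
  linear_combination (Lg p q r n + AB p (q + r) n * (1 / ((n : ℝ) + 1))
    + AB q (p + r) n * (1 / ((n : ℝ) + 1))
    + (1 / ((n : ℝ) + 1) / ((n : ℝ) + 1))) * hs

lemma Lg_closed (p q r : ℝ) (hs : p + q + r = 1) (n : ℕ) :
    Lg p q r n = ∑ m ∈ Icc 1 n, (AB p r m + AB q r m) / m
      + ∑ m ∈ Icc 1 n, (1 - (q + r) ^ m - (p + r) ^ m) / ((m : ℝ) * m) := by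
  induction n with
  | zero => simp [Lg, mu, J]
  | succ n ih =>
    rw [Lg_rec p q r hs n, ih,
      Finset.sum_Icc_succ_top (by omega : 1 ≤ n + 1),
      Finset.sum_Icc_succ_top (by omega : 1 ≤ n + 1)]
    push_cast
    ring

/-- Joint expectation of harmonic-transformed multinomial counts:
for `(M, K, n−M−K)` multinomial with `n` trials and cell probabilities `(p, q, 1−p−q)`,
`E[(J(n)−J(M))(J(n)−J(K))]` equals
`∑_{m=1}^n ∑_{k=1}^m [(1−q)^m (1−p/(1−q))^k + (1−p)^m (1−q/(1−p))^k]/(mk)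
  + ∑_{m=1}^n [1 − (1−p)^m − (1−q)^m]/m²`. -/
theorem harmonic_multinomial_product (n : ℕ) (hn : 1 ≤ n) (p q : ℝ)
    (hp : 0 < p) (hq : 0 < q) (hpq : p + q < 1) :
    ∑ m ∈ Finset.range (n + 1), ∑ k ∈ Finset.range (n + 1 - m),
        (J n - J m) * (J n - J k) *
          ((n.factorial : ℝ) /
            ((m.factorial : ℝ) * (k.factorial : ℝ) * ((n - m - k).factorial : ℝ))) *
          p ^ m * q ^ k * (1 - p - q) ^ (n - m - k)
      = ∑ m ∈ Finset.Icc 1 n, ∑ k ∈ Finset.Icc 1 m,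
          ((1 - q) ^ m * (1 - p / (1 - q)) ^ k
            + (1 - p) ^ m * (1 - q / (1 - p)) ^ k) / (m * k)
        + ∑ m ∈ Finset.Icc 1 n, (1 - (1 - p) ^ m - (1 - q) ^ m) / (m : ℝ) ^ 2 := by
  set r : ℝ := 1 - p - q with hr
  have hs : p + q + r = 1 := by rw [hr]; ring
  have hq1 : (1 : ℝ) - q ≠ 0 := by nlinarith
  have hp1 : (1 : ℝ) - p ≠ 0 := by nlinarith
  have hL : ∑ m ∈ Finset.range (n + 1), ∑ k ∈ Finset.range (n + 1 - m),
        (J n - J m) * (J n - J k) *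
          ((n.factorial : ℝ) /
            ((m.factorial : ℝ) * (k.factorial : ℝ) * ((n - m - k).factorial : ℝ))) *
          p ^ m * q ^ k * r ^ (n - m - k)
      = Lg p q r n := by
    apply Finset.sum_congr rfl
    intro m hm
    apply Finset.sum_congr rfl
    intro k hk
    simp only [mem_range] at hm hk
    have hm' : m ≤ n := by omega
    have hk' : k ≤ n - m := by omega
    have hW : (n.choose m : ℝ) * ((n - m).choose k : ℝ)
        = (n.factorial : ℝ) /
            ((m.factorial : ℝ) * (k.factorial : ℝ) * ((n - m - k).factorial : ℝ)) := by
      rw [Nat.cast_choose ℝ hm', Nat.cast_choose ℝ hk']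
      have n1 : (m.factorial : ℝ) ≠ 0 := by exact_mod_cast Nat.factorial_ne_zero m
      have n2 : (k.factorial : ℝ) ≠ 0 := by exact_mod_cast Nat.factorial_ne_zero k
      have n3 : ((n - m).factorial : ℝ) ≠ 0 := by exact_mod_cast Nat.factorial_ne_zero _
      have n4 : ((n - m - k).factorial : ℝ) ≠ 0 := by exact_mod_cast Nat.factorial_ne_zero _
      field_simp
    unfold mu
    rw [hW]
    ring
  rw [hL, Lg_closed p q r hs n]
  congr 1
  · apply Finset.sum_congr rfl
    intro m hm
    simp only [mem_Icc] at hm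
    have hm0 : (m : ℝ) ≠ 0 := by
      have : 1 ≤ m := hm.1
      positivity
    have hAB : AB p r m = ∑ k ∈ Icc 1 m, r ^ k * (p + r) ^ (m - k) / k := rfl
    have hAB' : AB q r m = ∑ k ∈ Icc 1 m, r ^ k * (q + r) ^ (m - k) / k := rfl
    rw [hAB, hAB', ← Finset.sum_add_distrib, Finset.sum_div]
    apply Finset.sum_congr rfl
    intro k hk
    simp only [mem_Icc] at hk
    have hk0 : (k : ℝ) ≠ 0 := by
      have : 1 ≤ k := hk.1
      positivity
    have hkm : k ≤ m := hk.2
    have e1 : (1 : ℝ) - p / (1 - q) = r / (1 - q) := by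
      rw [hr]; field_simp; try ring
    have e2 : (1 : ℝ) - q / (1 - p) = r / (1 - p) := by
      rw [hr]; field_simp; try ring
    have hpr : p + r = 1 - q := by rw [hr]; ring
    have hqr : q + r = 1 - p := by rw [hr]; ring
    have key1 : (1 - q) ^ m * (1 - p / (1 - q)) ^ k = r ^ k * (p + r) ^ (m - k) := by
      rw [e1, div_pow, hpr]
      rw [← pow_mul_pow_sub (1 - q) hkm]
      field_simp
    have key2 : (1 - p) ^ m * (1 - q / (1 - p)) ^ k = r ^ k * (q + r) ^ (m - k) := by
      rw [e2, div_pow, hqr]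
      rw [← pow_mul_pow_sub (1 - p) hkm]
      field_simp
    rw [key1, key2, ← add_div, div_div, mul_comm (k : ℝ) (m : ℝ)]
  · apply Finset.sum_congr rfl
    intro m hm
    have hqr : q + r = 1 - p := by rw [hr]; ring
    have hpr : p + r = 1 - q := by rw [hr]; ring
    rw [hqr, hpr, sq]
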